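/- The disjunctive sum of two guaranteed scoring games is a guaranteed scoring game. -/

import Mathlib

/-- A scoring game: `la`/`ra` are the atom values (relevant when the
corresponding option list is empty), `L`/`R` the Left and Right options. -/
inductive SG : Type
  | mk (la ra : ℝ) (L R : List SG) : SG

namespace SG

theorem sizeOf_lt_of_mem {g : SG} {l : List SG} (h : g ∈ l) : sizeOf g < sizeOf l :=
  List.sizeOf_lt_of_mem h

noncomputable instance : DecidableEq SG := Classical.decEq _

def la : SG → ℝ | mk a _ _ _ => a
def ra : SG → ℝ | mk _ b _ _ => b
def L : SG → List SG | mk _ _ l _ => l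
def R : SG → List SG | mk _ _ _ r => r

/-- The list of atom values occurring in atomic followers of a game. -/
def atomList : SG → List ℝ
  | mk a b ls rs =>
    (if ls.isEmpty then [a] else (ls.attach.map (fun x => atomList x.1)).flatten)
    ++ (if rs.isEmpty then [b] else (rs.attach.map (fun x => atomList x.1)).flatten)
decreasing_by all_goals (simp only [SG.mk.sizeOf_spec]; (first | (have := sizeOf_lt_of_mem x.2) | (have := sizeOf_lt_of_mem (by assumption : x ∈ _))); omega)

/-- The guaranteed condition. -/
def Guaranteed : SG → Prop
  | mk a b ls rs =>
    (∀ x ∈ ls, Guaranteed x) ∧ (∀ x ∈ rs, Guaranteed x) ∧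
    (ls = [] → ∀ s ∈ (mk a b ls rs).atomList, a ≤ s) ∧
    (rs = [] → ∀ s ∈ (mk a b ls rs).atomList, s ≤ b)
decreasing_by all_goals (simp only [SG.mk.sizeOf_spec]; (first | (have := sizeOf_lt_of_mem x.2) | (have := sizeOf_lt_of_mem (by assumption : x ∈ _))); omega)

/-- Disjunctive sum. -/
noncomputable def add : SG → SG → SG
  | mk a1 b1 L1 R1, mk a2 b2 L2 R2 =>
    mk (a1 + a2) (b1 + b2)
      (L1.attach.map (fun x => add x.1 (mk a2 b2 L2 R2))
        ++ L2.attach.map (fun x => add (mk a1 b1 L1 R1) x.1))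
      (R1.attach.map (fun x => add x.1 (mk a2 b2 L2 R2))
        ++ R2.attach.map (fun x => add (mk a1 b1 L1 R1) x.1))
termination_by g h => sizeOf g + sizeOf h
decreasing_by all_goals (simp only [SG.mk.sizeOf_spec]; (first | (have := sizeOf_lt_of_mem x.2) | (have := sizeOf_lt_of_mem (by assumption : x ∈ _))); omega)

/-- Left- and Right-stops (as a pair). -/
noncomputable def stops : SG → ℝ × ℝ
  | mk a b ls rs =>
    (if ls.isEmpty then a else (WithBot.unbotD 0 (ls.attach.map (fun x => (stops x.1).2)).maximum),
     if rs.isEmpty then b else (WithTop.untopD 0 (rs.attach.map (fun x => (stops x.1).1)).minimum))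
decreasing_by all_goals (simp only [SG.mk.sizeOf_spec]; (first | (have := sizeOf_lt_of_mem x.2) | (have := sizeOf_lt_of_mem (by assumption : x ∈ _))); omega)

noncomputable def Ls (g : SG) : ℝ := g.stops.1
noncomputable def Rs (g : SG) : ℝ := g.stops.2

/-- The conjugate: interchange Left and Right and negate atoms. -/
noncomputable def conj : SG → SG
  | mk a b ls rs =>
    mk (-b) (-a) (rs.attach.map (fun x => conj x.1)) (ls.attach.map (fun x => conj x.1))
decreasing_by all_goals (simp only [SG.mk.sizeOf_spec]; (first | (have := sizeOf_lt_of_mem x.2) | (have := sizeOf_lt_of_mem (by assumption : x ∈ _))); omega)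

/-- The game ⟨∅^s | ∅^s⟩ of a real number `s`. -/
def num (s : ℝ) : SG := mk s s [] []

/-- The zero game ⟨∅^0 | ∅^0⟩. -/
def zero : SG := num 0

/-- Waiting moves: the image of the Normal-play integer `n`. -/
def wait : ℕ → SG
  | 0 => zero
  | n + 1 => mk 0 0 [wait n] []

/-- Birthday: the depth of the game tree. -/
def birthday : SG → ℕ
  | mk _ _ ls rs =>
    max (WithBot.unbotD 0 (ls.attach.map (fun x => birthday x.1 + 1)).maximum)
        (WithBot.unbotD 0 (rs.attach.map (fun x => birthday x.1 + 1)).maximum)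
decreasing_by all_goals (simp only [SG.mk.sizeOf_spec]; (first | (have := sizeOf_lt_of_mem x.2) | (have := sizeOf_lt_of_mem (by assumption : x ∈ _))); omega)

/-- `Ge G H` is the order `G ≽ H`. -/
def Ge (G H : SG) : Prop :=
  ∀ X : SG, X.Guaranteed → Ls (G.add X) ≥ Ls (H.add X) ∧ Rs (G.add X) ≥ Rs (H.add X)

/-- Equivalence `G ∼ H`. -/
def Equiv (G H : SG) : Prop := Ge G H ∧ Ge H G

/-- Right's pass-allowed Left-stop `L̲s(G) = min_n Ls(G - n̂)`. -/
noncomputable def lsU (G : SG) : ℝ := ⨅ n : ℕ, Ls (G.add (wait n).conj)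

/-- Left's pass-allowed Right-stop `R̄s(G) = max_n Rs(G + n̂)`. -/
noncomputable def rsO (G : SG) : ℝ := ⨆ n : ℕ, Rs (G.add (wait n))

/-- `L̄s(G) = max_n Ls(G + n̂)`. -/
noncomputable def lsO (G : SG) : ℝ := ⨆ n : ℕ, Ls (G.add (wait n))

/-- `R̲s(G) = min_n Rs(G + n̂)`. -/
noncomputable def rsU (G : SG) : ℝ := ⨅ n : ℕ, Rs (G.add (wait n))

/-- Identity of games: same tree structure (up to reordering of options),
with identical atoms at atomic positions. -/
def Ident : SG → SG → Prop
  | mk a1 b1 L1 R1, mk a2 b2 L2 R2 =>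
    (L1 = [] ↔ L2 = []) ∧ (L1 = [] → a1 = a2) ∧
    (R1 = [] ↔ R2 = []) ∧ (R1 = [] → b1 = b2) ∧
    (∀ x ∈ L1, ∃ y : {z // z ∈ L2}, Ident x y.1) ∧
    (∀ y ∈ L2, ∃ x : {z // z ∈ L1}, Ident x.1 y) ∧
    (∀ x ∈ R1, ∃ y : {z // z ∈ R2}, Ident x y.1) ∧
    (∀ y ∈ R2, ∃ x : {z // z ∈ R1}, Ident x.1 y)
termination_by g h => sizeOf g
decreasing_by all_goals (simp only [SG.mk.sizeOf_spec]; (first | (have := sizeOf_lt_of_mem x.2) | (have := sizeOf_lt_of_mem (by assumption : x ∈ _))); omega)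

/-- `Linked H G`: `H` is linked to `G` (by some guaranteed `T`). -/
def Linked (H G : SG) : Prop :=
  ∃ T : SG, T.Guaranteed ∧ Ls (H.add T) < 0 ∧ 0 < Rs (G.add T)

/-- Replace every atom of `G` by `∅^x`. -/
def subst (v : ℝ) : SG → SG
  | mk _ _ ls rs =>
    mk v v (ls.attach.map (fun x => subst v x.1)) (rs.attach.map (fun x => subst v x.1))
decreasing_by all_goals (simp only [SG.mk.sizeOf_spec]; (first | (have := sizeOf_lt_of_mem x.2) | (have := sizeOf_lt_of_mem (by assumption : x ∈ _))); omega)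

/-- The maximum atom value in `G`. -/
noncomputable def maxAtom (G : SG) : ℝ := WithBot.unbotD 0 G.atomList.maximum

/-- The minimum atom value in `G`. -/
noncomputable def minAtom (G : SG) : ℝ := WithTop.untopD 0 G.atomList.minimum


lemma atomList_mk (a b : ℝ) (ls rs : List SG) :
    (mk a b ls rs).atomList =
      (if ls.isEmpty then [a] else (ls.map atomList).flatten)
      ++ (if rs.isEmpty then [b] else (rs.map atomList).flatten) := by
  rw [atomList]
  congr 1 <;> split <;> simp [List.attach_map_val]

lemma mem_atomList_of_mem_L {x : SG} {ls : List SG} (hx : x ∈ ls) (a b : ℝ) (rs : List SG)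
    {u : ℝ} (hu : u ∈ x.atomList) : u ∈ (mk a b ls rs).atomList := by
  rw [atomList_mk]
  have hne : ls.isEmpty = false := by
    simp only [List.isEmpty_eq_false_iff_exists_mem]; exact ⟨x, hx⟩
  refine List.mem_append.2 (Or.inl ?_)
  rw [if_neg (by simp [hne])]
  exact List.mem_flatten.2 ⟨x.atomList, List.mem_map.2 ⟨x, hx, rfl⟩, hu⟩

lemma mem_atomList_of_mem_R {x : SG} {rs : List SG} (hx : x ∈ rs) (a b : ℝ) (ls : List SG)
    {u : ℝ} (hu : u ∈ x.atomList) : u ∈ (mk a b ls rs).atomList := by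
  rw [atomList_mk]
  have hne : rs.isEmpty = false := by
    simp only [List.isEmpty_eq_false_iff_exists_mem]; exact ⟨x, hx⟩
  refine List.mem_append.2 (Or.inr ?_)
  rw [if_neg (by simp [hne])]
  exact List.mem_flatten.2 ⟨x.atomList, List.mem_map.2 ⟨x, hx, rfl⟩, hu⟩

lemma mem_atomList_add : ∀ (G H : SG), ∀ u ∈ (G.add H).atomList,
    ∃ s ∈ G.atomList, ∃ t ∈ H.atomList, u = s + t
  | mk a1 b1 L1 R1, mk a2 b2 L2 R2 => by
    intro u hu
    rw [add, atomList_mk] at hu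
    have base : ∀ (c1 c2 : ℝ), (c1 ∈ (mk a1 b1 L1 R1).atomList) → (c2 ∈ (mk a2 b2 L2 R2).atomList) →
        ∃ s ∈ (mk a1 b1 L1 R1).atomList, ∃ t ∈ (mk a2 b2 L2 R2).atomList, c1 + c2 = s + t :=
      fun c1 c2 h1 h2 => ⟨c1, h1, c2, h2, rfl⟩
    rcases List.mem_append.1 hu with h | h
    · split_ifs at h with hemp
      · obtain ⟨e1, e2⟩ : L1 = [] ∧ L2 = [] := by
          simpa [List.isEmpty_iff] using hemp
        rw [List.mem_singleton] at h
        subst h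
        refine base a1 a2 ?_ ?_
        · rw [atomList_mk, if_pos (by simp [e1])]; simp
        · rw [atomList_mk, if_pos (by simp [e2])]; simp
      · obtain ⟨l, hl, hul⟩ := List.mem_flatten.1 h
        obtain ⟨g, hg, rfl⟩ := List.mem_map.1 hl
        rcases List.mem_append.1 hg with hg | hg
        · obtain ⟨⟨x, hx⟩, _, rfl⟩ := List.mem_map.1 hg
          obtain ⟨s, hs, t, ht, rfl⟩ := mem_atomList_add x (mk a2 b2 L2 R2) u hul
          exact ⟨s, mem_atomList_of_mem_L hx _ _ _ hs, t, ht, rfl⟩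
        · obtain ⟨⟨y, hy⟩, _, rfl⟩ := List.mem_map.1 hg
          obtain ⟨s, hs, t, ht, rfl⟩ := mem_atomList_add (mk a1 b1 L1 R1) y u hul
          exact ⟨s, hs, t, mem_atomList_of_mem_L hy _ _ _ ht, rfl⟩
    · split_ifs at h with hemp
      · obtain ⟨e1, e2⟩ : R1 = [] ∧ R2 = [] := by
          simpa [List.isEmpty_iff] using hemp
        rw [List.mem_singleton] at h
        subst h
        refine base b1 b2 ?_ ?_
        · rw [atomList_mk]
          refine List.mem_append.2 (Or.inr ?_)
          rw [if_pos (by simp [e1])]; simp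
        · rw [atomList_mk]
          refine List.mem_append.2 (Or.inr ?_)
          rw [if_pos (by simp [e2])]; simp
      · obtain ⟨l, hl, hul⟩ := List.mem_flatten.1 h
        obtain ⟨g, hg, rfl⟩ := List.mem_map.1 hl
        rcases List.mem_append.1 hg with hg | hg
        · obtain ⟨⟨x, hx⟩, _, rfl⟩ := List.mem_map.1 hg
          obtain ⟨s, hs, t, ht, rfl⟩ := mem_atomList_add x (mk a2 b2 L2 R2) u hul
          exact ⟨s, mem_atomList_of_mem_R hx _ _ _ hs, t, ht, rfl⟩
        · obtain ⟨⟨y, hy⟩, _, rfl⟩ := List.mem_map.1 hg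
          obtain ⟨s, hs, t, ht, rfl⟩ := mem_atomList_add (mk a1 b1 L1 R1) y u hul
          exact ⟨s, hs, t, mem_atomList_of_mem_R hy _ _ _ ht, rfl⟩
termination_by G H => sizeOf G + sizeOf H
decreasing_by all_goals (simp only [SG.mk.sizeOf_spec]; (first | (have := sizeOf_lt_of_mem hx) | (have := sizeOf_lt_of_mem hy)); omega)

lemma guaranteed_add_aux : ∀ (G H : SG), G.Guaranteed → H.Guaranteed → (G.add H).Guaranteed
  | mk a1 b1 L1 R1, mk a2 b2 L2 R2 => by
    intro hG hH
    have hG' := hG; have hH' := hH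
    rw [Guaranteed] at hG' hH'
    obtain ⟨hG1, hG2, hG3, hG4⟩ := hG'
    obtain ⟨hH1, hH2, hH3, hH4⟩ := hH'
    rw [add, Guaranteed]
    refine ⟨?_, ?_, ?_, ?_⟩
    · intro x hx
      rcases List.mem_append.1 hx with h | h
      · obtain ⟨⟨y, hy⟩, _, rfl⟩ := List.mem_map.1 h
        exact guaranteed_add_aux y _ (hG1 y hy) hH
      · obtain ⟨⟨y, hy⟩, _, rfl⟩ := List.mem_map.1 h
        exact guaranteed_add_aux _ y hG (hH1 y hy)
    · intro x hx
      rcases List.mem_append.1 hx with h | h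
      · obtain ⟨⟨y, hy⟩, _, rfl⟩ := List.mem_map.1 h
        exact guaranteed_add_aux y _ (hG2 y hy) hH
      · obtain ⟨⟨y, hy⟩, _, rfl⟩ := List.mem_map.1 h
        exact guaranteed_add_aux _ y hG (hH2 y hy)
    · intro hemp u hu
      obtain ⟨e1, e2⟩ : L1 = [] ∧ L2 = [] := by
        simpa using hemp
      have hu' : u ∈ ((mk a1 b1 L1 R1).add (mk a2 b2 L2 R2)).atomList := by
        rw [add]; exact hu
      obtain ⟨s, hs, t, ht, rfl⟩ := mem_atomList_add _ _ u hu'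
      exact add_le_add (hG3 e1 s hs) (hH3 e2 t ht)
    · intro hemp u hu
      obtain ⟨e1, e2⟩ : R1 = [] ∧ R2 = [] := by
        simpa using hemp
      have hu' : u ∈ ((mk a1 b1 L1 R1).add (mk a2 b2 L2 R2)).atomList := by
        rw [add]; exact hu
      obtain ⟨s, hs, t, ht, rfl⟩ := mem_atomList_add _ _ u hu'
      exact add_le_add (hG4 e1 s hs) (hH4 e2 t ht)
termination_by G H => sizeOf G + sizeOf H
decreasing_by all_goals (simp only [SG.mk.sizeOf_spec]; (first | (have := sizeOf_lt_of_mem hy) | skip); omega)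

/-- The disjunctive sum of two guaranteed scoring games is guaranteed. -/
theorem guaranteed_add (G H : SG) (hG : G.Guaranteed) (hH : H.Guaranteed) :
    (G.add H).Guaranteed := guaranteed_add_aux G H hG hH

end SG
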